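/- (Remainder Lemma, vanishing part.) Assume the avoidance hypothesis. Then for every u ∈ ℝ² with ‖u‖ ≤ 1, if c·u₁ + d·u₂ = 0 then g(u) = 0. -/

import Mathlib

noncomputable section

/-- Matrix–vector multiplication, viewed as a map on the Euclidean plane. -/
def mv (M : Matrix (Fin 2) (Fin 2) ℝ) (u : EuclideanSpace ℝ (Fin 2)) :
    EuclideanSpace ℝ (Fin 2) := WithLp.toLp 2 (M.mulVec u)

/-- Range `r(p) = √((p₁−a)² + (p₂−b)²)` to the sensor located at `(a, b)`. -/
def rr (a b : ℝ) (p : EuclideanSpace ℝ (Fin 2)) : ℝ :=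
  Real.sqrt ((p 0 - a) ^ 2 + (p 1 - b) ^ 2)

/-- Bearing `θ(p)`: polar angle in `(−π, π]` of the complex number `(p₁−a) + i(p₂−b)`. -/
def theta (a b : ℝ) (p : EuclideanSpace ℝ (Fin 2)) : ℝ :=
  Complex.arg ⟨p 0 - a, p 1 - b⟩

/-- Jacobian matrix of the range–bearing measurement map at `p`. -/
def Jh (a b : ℝ) (p : EuclideanSpace ℝ (Fin 2)) : Matrix (Fin 2) (Fin 2) ℝ :=
  !![(p 0 - a) / rr a b p, (p 1 - b) / rr a b p;
     -(p 1 - b) / (rr a b p) ^ 2, (p 0 - a) / (rr a b p) ^ 2]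

/-- The range–bearing measurement map `h(p) = (r(p), θ(p))`. -/
def hMeas (a b : ℝ) (p : EuclideanSpace ℝ (Fin 2)) : EuclideanSpace ℝ (Fin 2) :=
  WithLp.toLp 2 ![rr a b p, theta a b p]

/-- The linearization remainder `g(u) = h(x + Eu) − h(x) − J_h(x)·(Eu)`. -/
def gRem (a b : ℝ) (x : EuclideanSpace ℝ (Fin 2)) (E : Matrix (Fin 2) (Fin 2) ℝ)
    (u : EuclideanSpace ℝ (Fin 2)) : EuclideanSpace ℝ (Fin 2) :=
  hMeas a b (x + mv E u) - hMeas a b x - mv (Jh a b x) (mv E u)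

/-- **Remainder Lemma, vanishing part.** Under the avoidance hypothesis, for every `u`
with `‖u‖ ≤ 1`, if `c·u₁ + d·u₂ = 0` then `g(u) = 0`. -/
theorem gRem_eq_zero_of_degenerate
    (a b : ℝ) (x : EuclideanSpace ℝ (Fin 2)) (E : Matrix (Fin 2) (Fin 2) ℝ)
    (hE : 0 < E.det)
    (havoid : ∀ u : EuclideanSpace ℝ (Fin 2), ‖u‖ ≤ 1 →
      ¬((x + mv E u) 0 ≤ a ∧ (x + mv E u) 1 = b))
    (c d : ℝ)
    (hc : c = E 0 0 * (x 1 - b) - E 1 0 * (x 0 - a))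
    (hd : d = E 0 1 * (x 1 - b) - E 1 1 * (x 0 - a)) :
    ∀ u : EuclideanSpace ℝ (Fin 2), ‖u‖ ≤ 1 →
      c * u 0 + d * u 1 = 0 → gRem a b x E u = 0 := by
  intro u hu hcd
  set X : ℝ := x 0 - a with hX
  set Y : ℝ := x 1 - b with hY
  -- x itself avoids the radial
  have hx : ¬(X ≤ 0 ∧ Y = 0) := by
    have h0 := havoid 0 (by simp)
    intro ⟨h1, h2⟩
    apply h0
    have hz : ∀ i, mv E (0 : EuclideanSpace ℝ (Fin 2)) i = 0 := by
      intro i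
      simp [mv, Matrix.mulVec, dotProduct, Fin.sum_univ_two]
    constructor
    · have := hz 0
      simp only [PiLp.add_apply, this, add_zero]
      linarith
    · have := hz 1
      simp only [PiLp.add_apply, this, add_zero]
      linarith
  -- components of v = E u
  set v0 : ℝ := mv E u 0 with hv0
  set v1 : ℝ := mv E u 1 with hv1
  have hv0' : v0 = E 0 0 * u 0 + E 0 1 * u 1 := by
    simp [hv0, mv, Matrix.mulVec, dotProduct, Fin.sum_univ_two]
  have hv1' : v1 = E 1 0 * u 0 + E 1 1 * u 1 := by
    simp [hv1, mv, Matrix.mulVec, dotProduct, Fin.sum_univ_two]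
  have hrel : v0 * Y = v1 * X := by
    rw [hv0', hv1']
    have : c * u 0 + d * u 1 = (E 0 0 * u 0 + E 0 1 * u 1) * Y - (E 1 0 * u 0 + E 1 1 * u 1) * X := by
      rw [hc, hd]; ring
    linarith [hcd, this.symm ▸ hcd]
  -- find t with v = t (X, Y)
  obtain ⟨t, ht0, ht1⟩ : ∃ t : ℝ, v0 = t * X ∧ v1 = t * Y := by
    by_cases hYz : Y = 0
    · have hXpos : 0 < X := by
        rcases lt_or_ge 0 X with h | h
        · exact h
        · exact absurd ⟨h, hYz⟩ hx
      refine ⟨v0 / X, by field_simp, ?_⟩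
      have : v1 * X = 0 := by rw [← hrel, hYz, mul_zero]
      have hv1z : v1 = 0 := by
        rcases mul_eq_zero.mp this with h | h
        · exact h
        · exact absurd h hXpos.ne'
      rw [hv1z, hYz, mul_zero]
    · refine ⟨v1 / Y, ?_, by field_simp⟩
      field_simp
      linarith [hrel]
  -- 1 + t > 0
  have hr2pos : 0 < X ^ 2 + Y ^ 2 := by
    rcases eq_or_ne X 0 with hXz | hXz
    · have : Y ≠ 0 := fun h => hx ⟨le_of_eq hXz, h⟩
      positivity
    · positivity
  have htpos : 0 < 1 + t := by
    by_contra hcon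
    push_neg at hcon
    have ht : t ≤ -1 := by linarith
    have htne : t ≠ 0 := by linarith
    have htneg : t < 0 := by linarith
    set s : ℝ := (-t)⁻¹ with hs
    have hspos : 0 < s := by rw [hs]; exact inv_pos.mpr (by linarith)
    have hsle : s ≤ 1 := by
      rw [hs]
      rw [inv_le_one_iff₀]
      right; linarith
    have hst : s * t = -1 := by
      rw [hs]
      field_simp
    have hmv : ∀ i, mv E (s • u) i = s * mv E u i := by
      intro i
      simp [mv, Matrix.mulVec, dotProduct, Fin.sum_univ_two, PiLp.smul_apply, smul_eq_mul]
      fin_cases i <;> simp <;> ring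
    apply havoid (s • u)
    · rw [norm_smul]
      simp only [Real.norm_eq_abs, abs_of_pos hspos]
      calc s * ‖u‖ ≤ 1 * 1 := by
            apply mul_le_mul hsle hu (norm_nonneg u) (by norm_num)
        _ = 1 := by norm_num
    · constructor
      · have : (x + mv E (s • u)) 0 = x 0 + s * v0 := by
          simp only [PiLp.add_apply, hmv 0, hv0]
        rw [this, ht0]
        have : x 0 + s * (t * X) = a + (1 + s * t) * X := by
          rw [hX]; ring
        rw [this, hst]
        norm_num
      · have : (x + mv E (s • u)) 1 = x 1 + s * v1 := by
          simp only [PiLp.add_apply, hmv 1, hv1]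
        rw [this, ht1]
        have : x 1 + s * (t * Y) = b + (1 + s * t) * Y := by
          rw [hY]; ring
        rw [this, hst]
        norm_num
  -- now compute everything
  set r : ℝ := Real.sqrt (X ^ 2 + Y ^ 2) with hr
  have hrpos : 0 < r := Real.sqrt_pos.mpr hr2pos
  have hrsq : r ^ 2 = X ^ 2 + Y ^ 2 := Real.sq_sqrt hr2pos.le
  have hp0 : (x + mv E u) 0 - a = (1 + t) * X := by
    simp only [PiLp.add_apply, ← hv0]
    rw [ht0, hX]; ring
  have hp1 : (x + mv E u) 1 - b = (1 + t) * Y := by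
    simp only [PiLp.add_apply, ← hv1]
    rw [ht1, hY]; ring
  have hrrx : rr a b x = r := by rw [rr, hr, ← hX, ← hY]
  have hrrp : rr a b (x + mv E u) = (1 + t) * r := by
    rw [rr, hp0, hp1]
    have : ((1 + t) * X) ^ 2 + ((1 + t) * Y) ^ 2 = (1 + t) ^ 2 * (X ^ 2 + Y ^ 2) := by ring
    rw [this, Real.sqrt_mul (sq_nonneg _), Real.sqrt_sq htpos.le, hr]
  have hth : theta a b (x + mv E u) = theta a b x := by
    rw [theta, theta, hp0, hp1, ← hX, ← hY]
    have hz : (⟨(1 + t) * X, (1 + t) * Y⟩ : ℂ) = ((1 + t : ℝ) : ℂ) * ⟨X, Y⟩ := by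
      apply Complex.ext <;> simp
    rw [hz, Complex.arg_real_mul _ htpos]
  -- J_h(x) (Eu) components
  have key : mv E u = (WithLp.toLp 2 ![t * X, t * Y] : EuclideanSpace ℝ (Fin 2)) := by
    ext i
    fin_cases i
    · simpa using ht0
    · simpa using ht1
  have hJ0 : mv (Jh a b x) (mv E u) 0 = t * r := by
    simp only [key, mv, Matrix.mulVec, dotProduct, Fin.sum_univ_two, Jh, WithLp.ofLp_toLp, Matrix.of_apply]
    simp only [Matrix.cons_val', Matrix.cons_val_zero, Matrix.cons_val_one, Matrix.head_cons,
      Matrix.empty_val', Matrix.cons_val_fin_one, Matrix.head_fin_const, ← hX, ← hY, hrrx]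
    rw [← hv0', ← hv1', ht0, ht1]
    field_simp
    have hrsq' : r ^ 2 = (x 0 - a) ^ 2 + (x 1 - b) ^ 2 := by rw [hrsq, hX, hY]
    linear_combination (-t) * hrsq'
  have hJ1 : mv (Jh a b x) (mv E u) 1 = 0 := by
    simp only [key, mv, Matrix.mulVec, dotProduct, Fin.sum_univ_two, Jh, WithLp.ofLp_toLp, Matrix.of_apply]
    simp only [Matrix.cons_val', Matrix.cons_val_zero, Matrix.cons_val_one, Matrix.head_cons,
      Matrix.empty_val', Matrix.cons_val_fin_one, Matrix.head_fin_const, ← hX, ← hY, hrrx]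
    rw [← hv0', ← hv1', ht0, ht1]
    field_simp
    ring
  ext i
  fin_cases i
  · show gRem a b x E u 0 = 0
    simp only [gRem, PiLp.sub_apply, hMeas, WithLp.ofLp_toLp, Matrix.cons_val_zero, hrrp, hrrx, hJ0]
    ring
  · show gRem a b x E u 1 = 0
    simp only [gRem, PiLp.sub_apply, hMeas, WithLp.ofLp_toLp, Matrix.cons_val_one, Matrix.head_cons, hth, hJ1]
    ring
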